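/- Let r > 1 be an integer, let F_{q^{mr}} be the degree-r extension of F_{q^m}, set e = q^{m-1} + ⋯ + q, and let λ ∈ F_{q^m} be a nonzero element with Tr_{F_{q^m}/F_q}(λ) = 0. Then there exists α ∈ F_{q^{mr}} such that Tr_{F_{q^{mr}}/F_q}(λ α^{e+1}) ≠ 0. -/

import Mathlib

private lemma geom_mul_aux (q m : ℕ) (hq : 1 ≤ q) :
    (q - 1) * ∑ i ∈ Finset.range m, q ^ i = q ^ m - 1 := by
  induction m with
  | zero => simp
  | succ k ih =>
    rw [Finset.sum_range_succ, Nat.mul_add, ih]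
    have h1 : 1 ≤ q ^ k := Nat.one_le_pow _ _ hq
    have h3 : (q - 1) * q ^ k = q ^ (k+1) - q ^ k := by
      rw [Nat.sub_mul, one_mul, ← pow_succ']
    have h2 : q ^ k ≤ q ^ (k+1) := Nat.pow_le_pow_right hq (by omega)
    omega

set_option maxHeartbeats 1000000 in
/-- For `r > 1`, a nonzero trace-zero `λ ∈ F_{q^m}`, and `e = q^{m-1}+⋯+q`,
there is `α ∈ F_{q^{mr}}` with `Tr_{F_{q^{mr}}/F_q}(λ α^{e+1}) ≠ 0`. -/
theorem stmt6 (F E K : Type*) [Field F] [Fintype F] [Field E] [Fintype E]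
    [Field K] [Fintype K] [Algebra F E] [Algebra E K] [Algebra F K]
    [IsScalarTower F E K]
    (q m r : ℕ) (hq : Fintype.card F = q) (hE : Fintype.card E = q ^ m)
    (hK : Fintype.card K = q ^ (m * r)) (hm : 2 ≤ m) (hr : 1 < r)
    (e : ℕ) (he : e = ∑ i ∈ Finset.Ico 1 m, q ^ i)
    (lam : E) (hlam : lam ≠ 0) (htr : Algebra.trace F E lam = 0) :
    ∃ α : K, Algebra.trace F K (algebraMap E K lam * α ^ (e + 1)) ≠ 0 := by
  classical
  by_contra hcon
  push_neg at hcon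
  have hq2 : 2 ≤ q := hq ▸ Fintype.one_lt_card
  set n := e + 1 with hn
  have hn0 : 0 < n := Nat.succ_pos e
  set lam' : K := algebraMap E K lam with hlam'def
  have hlam'0 : lam' ≠ 0 := fun h =>
    hlam ((algebraMap E K).injective (by rw [map_zero]; exact h))
  -- the submonoid of (e+1)-st powers
  let M : Submonoid K :=
    { carrier := Set.range (fun x : K => x ^ n)
      mul_mem' := by rintro _ _ ⟨a, rfl⟩ ⟨b, rfl⟩; exact ⟨a * b, mul_pow a b n⟩
      one_mem' := ⟨1, one_pow n⟩ }
  let V : Subalgebra F K := Algebra.adjoin F (M : Set K)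
  -- the trace functional vanishes on V
  let T : K →ₗ[F] F := (Algebra.trace F K) ∘ₗ (LinearMap.mulLeft F lam')
  have hTV : ∀ x ∈ V, T x = 0 := by
    have hle : Subalgebra.toSubmodule V ≤ LinearMap.ker T := by
      rw [show Subalgebra.toSubmodule V =
          Submodule.span F ((Submonoid.closure (M : Set K) : Submonoid K) : Set K) from
          Algebra.adjoin_eq_span F (M : Set K), Submonoid.closure_eq, Submodule.span_le]
      rintro _ ⟨a, rfl⟩
      simpa [T] using hcon a
    intro x hx
    exact hle hx
  -- `e + 1` is small
  have hsum : n = ∑ i ∈ Finset.range m, q ^ i := by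
    rw [hn, he, Finset.range_eq_Ico, Finset.sum_eq_sum_Ico_succ_bot (by omega : 0 < m)]
    simp [add_comm]
  have hnle : n ≤ q ^ m - 1 := by
    have hgeom := geom_mul_aux q m (by omega)
    rw [← hsum] at hgeom
    rw [← hgeom]
    exact Nat.le_mul_of_pos_left n (by omega)
  -- counting the image of the power map on units
  let φ : Kˣ →* Kˣ := powMonoidHom n
  have hker : Nat.card (φ.ker) ≤ n := by
    rw [Nat.card_eq_fintype_card]
    have h1 := card_nthRoots_subgroup_units (Units.coeHom K) (fun a b h => Units.ext h) hn0 1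
    have h2 : Fintype.card (φ.ker) = Finset.card {g : Kˣ | g ^ n = 1} := by
      rw [Fintype.card_subtype]
      congr 1
      ext g
      simp [φ, MonoidHom.mem_ker, powMonoidHom, Units.ext_iff]
    calc Fintype.card (φ.ker) = Finset.card {g : Kˣ | g ^ n = 1} := h2
      _ ≤ Multiset.card (Polynomial.nthRoots n ((Units.coeHom K) 1)) := h1
      _ ≤ n := by simpa using Polynomial.card_nthRoots n (1 : K)
  have hlagrange : Nat.card Kˣ = Nat.card φ.range * Nat.card φ.ker := by
    rw [Subgroup.card_eq_card_quotient_mul_card_subgroup φ.ker]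
    congr 1
    exact Nat.card_congr (QuotientGroup.quotientKerEquivRange φ).toEquiv
  have hcardKu : Nat.card Kˣ = q ^ (m * r) - 1 := by
    rw [Nat.card_eq_fintype_card, Fintype.card_units, hK]
  -- lower bound on the range
  have hrange : q ^ (m * (r-1)) + 1 ≤ Nat.card φ.range := by
    by_contra hlt
    push_neg at hlt
    have h1 : Nat.card φ.range ≤ q ^ (m * (r-1)) := by omega
    have h2 : q ^ (m * r) - 1 ≤ q ^ (m * (r-1)) * (q ^ m - 1) := by
      calc q ^ (m * r) - 1 = Nat.card φ.range * Nat.card φ.ker := by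
            rw [← hcardKu, hlagrange]
        _ ≤ q ^ (m * (r-1)) * (q ^ m - 1) := Nat.mul_le_mul h1 (le_trans hker hnle)
    have hexp : m * (r-1) + m = m * r := by
      obtain ⟨c, rfl⟩ : ∃ c, r = c + 1 := ⟨r - 1, by omega⟩
      simp [Nat.mul_succ]
    have h3 : q ^ (m * (r-1)) * (q ^ m - 1) = q ^ (m * r) - q ^ (m * (r-1)) := by
      rw [Nat.mul_sub, mul_one, ← pow_add, hexp]
    have h4 : 2 ≤ q ^ (m * (r-1)) := by
      calc 2 ≤ q := hq2
        _ = q ^ 1 := (pow_one q).symm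
        _ ≤ q ^ (m * (r-1)) := Nat.pow_le_pow_right (by omega)
              (Nat.one_le_iff_ne_zero.mpr (Nat.mul_ne_zero (by omega) (by omega)))
    have h5 : q ^ (m * (r-1)) ≤ q ^ (m * r) :=
      Nat.pow_le_pow_right (by omega) (Nat.mul_le_mul_left m (by omega))
    omega
  -- V is large
  letI : Fintype ↥V := Fintype.ofFinite ↥V
  have hVbig : q ^ (m * (r-1)) + 1 ≤ Fintype.card ↥V := by
    have hinj : Function.Injective (fun u : φ.range => (⟨(u : Kˣ), by
        obtain ⟨u, hu⟩ := u
        obtain ⟨x, hx⟩ := hu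
        refine Algebra.subset_adjoin ⟨(x : K), ?_⟩
        show (x : K) ^ n = ((u : Kˣ) : K)
        have hpow : ((φ x : Kˣ) : K) = (x : K) ^ n := by simp [φ, powMonoidHom]
        rw [hx] at hpow
        exact hpow.symm⟩ : ↥V)) := by
      intro a b h
      ext
      exact congrArg (fun v : ↥V => (v : K)) h
    calc q ^ (m * (r-1)) + 1 ≤ Nat.card φ.range := hrange
      _ = Fintype.card φ.range := Nat.card_eq_fintype_card
      _ ≤ Fintype.card ↥V := Fintype.card_le_of_injective _ hinj
  -- V is a field, so its degree divides m * r
  have hVfield : IsField ↥V := Finite.isField_of_domain ↥V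
  letI : Field ↥V := hVfield.toField
  have hfrK : Module.finrank F K = m * r := by
    have h := Module.card_eq_pow_finrank (K := F) (V := K)
    rw [hK, hq] at h
    exact (Nat.pow_right_injective hq2 h.symm)
  have hcardV : Fintype.card ↥V = q ^ (Module.finrank F ↥V) := by
    rw [← hq]; exact Module.card_eq_pow_finrank
  have hdvd : Module.finrank F ↥V ∣ m * r :=
    ⟨Module.finrank ↥V K, by rw [← hfrK, ← Module.finrank_mul_finrank F ↥V K]⟩
  set d := Module.finrank F ↥V with hd
  have hdlb : m * (r-1) + 1 ≤ d := by
    by_contra hdc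
    push_neg at hdc
    have : q ^ d ≤ q ^ (m * (r-1)) := Nat.pow_le_pow_right (by omega) (by omega)
    omega
  have hdeq : d = m * r := by
    obtain ⟨c, hc⟩ := hdvd
    have hc0 : c ≠ 0 := by
      rintro rfl
      rw [Nat.mul_zero] at hc
      nlinarith [hm, hr]
    rcases Nat.lt_or_ge c 2 with h | h
    · interval_cases c <;> omega
    · exfalso
      have : m * r ≥ d * 2 := by
        calc m * r = d * c := hc
          _ ≥ d * 2 := Nat.mul_le_mul_left d h
      have hr1 : 1 ≤ r - 1 := by omega
      have : m * r ≥ 2 * (m * (r-1) + 1) := by omega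
      have hrr : m * (r - 1) * 2 ≥ m * r := by
        have : r ≤ 2 * (r - 1) := by omega
        nlinarith
      omega
  -- hence V = K
  have hVtop : ∀ x : K, x ∈ V := by
    have hcards : Fintype.card ↥V = Fintype.card K := by
      rw [hcardV, hdeq, hK]
    have hbij : Function.Bijective (fun v : ↥V => (v : K)) :=
      (Fintype.bijective_iff_injective_and_card _).mpr ⟨Subtype.val_injective, hcards⟩
    intro x
    obtain ⟨v, hv⟩ := hbij.2 x
    rw [← hv]; exact v.2
  -- conclude: the trace functional with λ' is zero, contradicting surjectivity of trace
  obtain ⟨y, hy⟩ := Algebra.trace_surjective F K 1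
  have := hTV (lam'⁻¹ * y) (hVtop _)
  rw [show T (lam'⁻¹ * y) = Algebra.trace F K (lam' * (lam'⁻¹ * y)) from rfl,
    ← mul_assoc, mul_inv_cancel₀ hlam'0, one_mul, hy] at this
  exact one_ne_zero this
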